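/- In the setting of the jump-down Markov chain on a finite rooted tree T̃ (transition probability from v to u ∈ T̃(v)∖{v} proportional to κ_u²), the expected hitting time of the leaf set satisfies the recurrence: for non-leaf v, E_v = ∑_{c child of v} (κ_c/κ_v) · [1/(η̄(c) + 1) + E_c], where E_m = 0 for leaves m. -/

import Mathlib

open Finset

/-- A finite rooted tree, given by its root, the children relation, the subtree
(vertex sets of subtrees rooted at each vertex), and root-to-descendant paths. -/
structure FinRootedTree (V : Type*) [Fintype V] [DecidableEq V] where
  root : V
  children : V → Finset V
  subtree : V → Finset V
  path : V → V → Finset V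
  mem_subtree_self : ∀ v, v ∈ subtree v
  subtree_eq : ∀ v, subtree v = insert v ((children v).biUnion subtree)
  childSubtree_disjoint : ∀ v, (children v : Set V).PairwiseDisjoint subtree
  not_mem_child_subtree : ∀ v c, c ∈ children v → v ∉ subtree c
  path_self : ∀ v, path v v = {v}
  path_step : ∀ v c u, c ∈ children v → u ∈ subtree c → path v u = insert v (path c u)
  path_subset : ∀ v u, u ∈ subtree v → path v u ⊆ subtree v
  root_subtree : subtree root = Finset.univ

variable {V : Type*} [Fintype V] [DecidableEq V]

/-- The set of leaves of the subtree rooted at `v`. -/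
def FinRootedTree.leaves (t : FinRootedTree V) (v : V) : Finset V :=
  (t.subtree v).filter fun u => t.children u = ∅

/-- The effective resistance of the subtree rooted at `v`, in terms of `κ`. -/
noncomputable def FinRootedTree.resistance (t : FinRootedTree V) (κ : V → ℝ) (v : V) : ℝ :=
  (∑ u ∈ t.subtree v, κ u ^ 2) / κ v ^ 2 - 1

namespace FinRootedTree

variable (t : FinRootedTree V)

lemma subtree_child_subset {v c : V} (hc : c ∈ t.children v) : t.subtree c ⊆ t.subtree v := by
  rw [t.subtree_eq v]
  exact (Finset.subset_biUnion_of_mem _ hc).trans (Finset.subset_insert _ _)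

lemma not_mem_biUnion_self (v : V) : v ∉ (t.children v).biUnion t.subtree := by
  intro h
  obtain ⟨c, hc, h⟩ := Finset.mem_biUnion.1 h
  exact t.not_mem_child_subtree v c hc h

lemma erase_subtree (v : V) :
    (t.subtree v).erase v = (t.children v).biUnion t.subtree := by
  rw [t.subtree_eq v, Finset.erase_insert (t.not_mem_biUnion_self v)]

lemma card_lt {v c : V} (hc : c ∈ t.children v) :
    (t.subtree c).card < (t.subtree v).card :=
  Finset.card_lt_card ⟨t.subtree_child_subset hc,
    fun h => t.not_mem_child_subtree v c hc (h (t.mem_subtree_self v))⟩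

lemma mem_leaves_of_child {v c m : V} (hc : c ∈ t.children v) (hm : m ∈ t.leaves c) :
    m ∈ t.leaves v := by
  simp only [leaves, mem_filter] at *
  exact ⟨t.subtree_child_subset hc hm.1, hm.2⟩

lemma leaves_nonempty (v : V) : (t.leaves v).Nonempty := by
  by_cases h : t.children v = ∅
  · exact ⟨v, by simp [leaves, h, t.mem_subtree_self]⟩
  · obtain ⟨c, hc⟩ := Finset.nonempty_iff_ne_empty.2 h
    obtain ⟨m, hm⟩ := leaves_nonempty c
    exact ⟨m, t.mem_leaves_of_child hc hm⟩
termination_by (t.subtree v).card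
decreasing_by exact t.card_lt hc

lemma sum_subtree (f : V → ℝ) (v : V) :
    ∑ u ∈ t.subtree v, f u = f v + ∑ c ∈ t.children v, ∑ u ∈ t.subtree c, f u := by
  rw [t.subtree_eq v, Finset.sum_insert (t.not_mem_biUnion_self v),
    Finset.sum_biUnion (t.childSubtree_disjoint v)]

lemma leaf_decomp {v m : V} (hv : t.children v ≠ ∅) (hm : m ∈ t.leaves v) :
    ∃ c ∈ t.children v, m ∈ t.leaves c := by
  simp only [leaves, mem_filter] at hm
  have h1 : m ∈ insert v ((t.children v).biUnion t.subtree) := by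
    rw [← t.subtree_eq v]; exact hm.1
  rcases Finset.mem_insert.1 h1 with h | h
  · exact absurd (h ▸ hm.2) hv
  · obtain ⟨c, hc, hmc⟩ := Finset.mem_biUnion.1 h
    exact ⟨c, hc, by simp [leaves, mem_filter, hmc, hm.2]⟩

lemma key (κ : V → ℝ)
    (hrec : ∀ v, t.children v ≠ ∅ → κ v = ∑ c ∈ t.children v, κ c)
    (hpath : ∀ v, ∀ m₀ ∈ t.leaves v, ∀ m₁ ∈ t.leaves v,
      ∑ u ∈ t.path v m₀, κ u = ∑ u ∈ t.path v m₁, κ u)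
    (v : V) : ∀ m ∈ t.leaves v,
    κ v * ∑ u ∈ t.path v m, κ u = ∑ u ∈ t.subtree v, κ u ^ 2 := by
  intro m hm
  by_cases h : t.children v = ∅
  · have hs : t.subtree v = {v} := by rw [t.subtree_eq v, h]; simp
    have hmv : m = v := by
      have := (Finset.mem_filter.1 hm).1
      rw [hs, Finset.mem_singleton] at this; exact this
    subst hmv
    rw [t.path_self, hs]; simp; ring
  · obtain ⟨c, hc, hmc⟩ := t.leaf_decomp h hm
    have hmsub : m ∈ t.subtree c := (Finset.mem_filter.1 hmc).1
    have hvnot : v ∉ t.path c m := fun hcon =>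
      t.not_mem_child_subtree v c hc (t.path_subset c m hmsub hcon)
    have hsplit : ∑ u ∈ t.path v m, κ u = κ v + ∑ u ∈ t.path c m, κ u := by
      rw [t.path_step v c m hc hmsub, Finset.sum_insert hvnot]
    have IH := key κ hrec hpath c m hmc
    -- every child's subtree sum equals κ c' * (path sum from c to m)
    have hall : ∀ c' ∈ t.children v,
        ∑ u ∈ t.subtree c', κ u ^ 2 = κ c' * ∑ u ∈ t.path c m, κ u := by
      intro c' hc'
      obtain ⟨m', hm'⟩ := t.leaves_nonempty c'
      have hm'sub : m' ∈ t.subtree c' := (Finset.mem_filter.1 hm').1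
      have IH' := key κ hrec hpath c' m' hm'
      have hvnot' : v ∉ t.path c' m' := fun hcon =>
        t.not_mem_child_subtree v c' hc' (t.path_subset c' m' hm'sub hcon)
      have hp := hpath v m hm m' (t.mem_leaves_of_child hc' hm')
      rw [hsplit, t.path_step v c' m' hc' hm'sub, Finset.sum_insert hvnot'] at hp
      have : ∑ u ∈ t.path c' m', κ u = ∑ u ∈ t.path c m, κ u := by linarith
      rw [← IH', this]
    rw [hsplit, t.sum_subtree (fun u => κ u ^ 2) v]
    have : ∑ c' ∈ t.children v, ∑ u ∈ t.subtree c', κ u ^ 2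
        = (∑ c' ∈ t.children v, κ c') * ∑ u ∈ t.path c m, κ u := by
      rw [Finset.sum_mul]
      exact Finset.sum_congr rfl hall
    rw [this, ← hrec v h]; ring
termination_by (t.subtree v).card
decreasing_by all_goals first
  | exact t.card_lt hc
  | exact t.card_lt hc'

lemma subtree_sum_pos (κ : V → ℝ) (hpos : ∀ v, 0 < κ v) (v : V) :
    0 < ∑ u ∈ t.subtree v, κ u ^ 2 :=
  Finset.sum_pos (fun u _ => pow_pos (hpos u) 2) ⟨v, t.mem_subtree_self v⟩

end FinRootedTree

lemma FinRootedTree.child_subtree_sum (t : FinRootedTree V) (κ : V → ℝ)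
    (hrec : ∀ v, t.children v ≠ ∅ → κ v = ∑ c ∈ t.children v, κ c)
    (hpath : ∀ v, ∀ m₀ ∈ t.leaves v, ∀ m₁ ∈ t.leaves v,
      ∑ u ∈ t.path v m₀, κ u = ∑ u ∈ t.path v m₁, κ u)
    {v c₀ m : V} (hc₀ : c₀ ∈ t.children v) (hm : m ∈ t.leaves c₀) :
    ∀ c ∈ t.children v,
      ∑ u ∈ t.subtree c, κ u ^ 2 = κ c * ∑ u ∈ t.path c₀ m, κ u := by
  intro c' hc'
  have hmsub : m ∈ t.subtree c₀ := (Finset.mem_filter.1 hm).1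
  have hvnot : v ∉ t.path c₀ m := fun hcon =>
    t.not_mem_child_subtree v c₀ hc₀ (t.path_subset c₀ m hmsub hcon)
  obtain ⟨m', hm'⟩ := t.leaves_nonempty c'
  have hm'sub : m' ∈ t.subtree c' := (Finset.mem_filter.1 hm').1
  have IH' := t.key κ hrec hpath c' m' hm'
  have hvnot' : v ∉ t.path c' m' := fun hcon =>
    t.not_mem_child_subtree v c' hc' (t.path_subset c' m' hm'sub hcon)
  have hp := hpath v m (t.mem_leaves_of_child hc₀ hm) m' (t.mem_leaves_of_child hc' hm')
  rw [t.path_step v c₀ m hc₀ hmsub, Finset.sum_insert hvnot,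
    t.path_step v c' m' hc' hm'sub, Finset.sum_insert hvnot'] at hp
  have heq : ∑ u ∈ t.path c' m', κ u = ∑ u ∈ t.path c₀ m, κ u := by linarith
  rw [← IH', heq]

theorem hitting_time_recurrence (t : FinRootedTree V) (κ : V → ℝ)
    (hrec : ∀ v, t.children v ≠ ∅ → κ v = ∑ c ∈ t.children v, κ c)
    (hpath : ∀ v, ∀ m₀ ∈ t.leaves v, ∀ m₁ ∈ t.leaves v,
      ∑ u ∈ t.path v m₀, κ u = ∑ u ∈ t.path v m₁, κ u)
    (hpos : ∀ v, 0 < κ v)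
    (E : V → ℝ)
    (hEleaf : ∀ m, t.children m = ∅ → E m = 0)
    (hEstep : ∀ v, t.children v ≠ ∅ →
      E v = 1 + ∑ u ∈ (t.subtree v).erase v,
        (κ u ^ 2 / ∑ w ∈ (t.subtree v).erase v, κ w ^ 2) * E u)
    : ∀ v, t.children v ≠ ∅ →
      E v = ∑ c ∈ t.children v, (κ c / κ v) * (1 / (t.resistance κ c + 1) + E c) := by
  -- the weighted sum of E over a subtree, in closed form
  have hF : ∀ u, ∑ w ∈ t.subtree u, κ w ^ 2 * E w
      = (∑ w ∈ t.subtree u, κ w ^ 2) * E u - ((∑ w ∈ t.subtree u, κ w ^ 2) - κ u ^ 2) := by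
    intro u
    by_cases h : t.children u = ∅
    · have hs : t.subtree u = {u} := by rw [t.subtree_eq u, h]; simp
      simp [hs, hEleaf u h]
    · have herase : κ u ^ 2 + ∑ w ∈ (t.subtree u).erase u, κ w ^ 2
          = ∑ w ∈ t.subtree u, κ w ^ 2 := by
        exact Finset.add_sum_erase _ (fun w => κ w ^ 2) (t.mem_subtree_self u)
      obtain ⟨c, hc⟩ := Finset.nonempty_iff_ne_empty.2 h
      have hcmem : c ∈ (t.subtree u).erase u := by
        refine Finset.mem_erase.2 ⟨fun hcu => ?_, t.subtree_child_subset hc (t.mem_subtree_self c)⟩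
        exact t.not_mem_child_subtree u c hc (hcu ▸ t.mem_subtree_self c)
      have hDpos : 0 < ∑ w ∈ (t.subtree u).erase u, κ w ^ 2 :=
        Finset.sum_pos' (fun w _ => sq_nonneg _) ⟨c, hcmem, pow_pos (hpos c) 2⟩
      have hstep := hEstep u h
      simp only [div_mul_eq_mul_div] at hstep
      rw [← Finset.sum_div] at hstep
      have h2 : ∑ w ∈ (t.subtree u).erase u, κ w ^ 2 * E w
          = (∑ w ∈ (t.subtree u).erase u, κ w ^ 2) * (E u - 1) := by
        have hne : (∑ w ∈ (t.subtree u).erase u, κ w ^ 2) ≠ 0 := ne_of_gt hDpos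
        field_simp at hstep
        linarith
      have h3 : κ u ^ 2 * E u + ∑ w ∈ (t.subtree u).erase u, κ w ^ 2 * E w
          = ∑ w ∈ t.subtree u, κ w ^ 2 * E w := by
        exact Finset.add_sum_erase _ (fun w => κ w ^ 2 * E w) (t.mem_subtree_self u)
      rw [← h3, h2]
      rw [← herase]; ring
  intro v hv
  have hsplitv : ∀ f : V → ℝ, ∑ w ∈ (t.subtree v).erase v, f w
      = ∑ c ∈ t.children v, ∑ w ∈ t.subtree c, f w := by
    intro f
    rw [t.erase_subtree v, Finset.sum_biUnion (t.childSubtree_disjoint v)]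
  obtain ⟨c₀, hc₀⟩ := Finset.nonempty_iff_ne_empty.2 hv
  obtain ⟨m, hm⟩ := t.leaves_nonempty c₀
  set P : ℝ := ∑ u ∈ t.path c₀ m, κ u with hPdef
  have hPc : ∀ c ∈ t.children v, ∑ u ∈ t.subtree c, κ u ^ 2 = κ c * P :=
    t.child_subtree_sum κ hrec hpath hc₀ hm
  have hP : 0 < P := by
    have h1 := hPc c₀ hc₀
    nlinarith [t.subtree_sum_pos κ hpos c₀, hpos c₀]
  have hT : ∑ w ∈ (t.subtree v).erase v, κ w ^ 2 * E w
      = (∑ c ∈ t.children v, (κ c ^ 2 + κ c * P * E c)) - κ v * P := by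
    rw [hsplitv (fun w => κ w ^ 2 * E w)]
    have hcong : ∀ c ∈ t.children v, ∑ w ∈ t.subtree c, κ w ^ 2 * E w
        = (κ c ^ 2 + κ c * P * E c) - κ c * P := by
      intro c hc
      rw [hF c, hPc c hc]; ring
    rw [Finset.sum_congr rfl hcong, Finset.sum_sub_distrib, ← Finset.sum_mul, ← hrec v hv]
  have hDval : ∑ w ∈ (t.subtree v).erase v, κ w ^ 2 = κ v * P := by
    rw [hsplitv (fun w => κ w ^ 2), Finset.sum_congr rfl hPc, ← Finset.sum_mul, ← hrec v hv]
  have hstep := hEstep v hv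
  simp only [div_mul_eq_mul_div] at hstep
  rw [← Finset.sum_div, hT, hDval] at hstep
  have hne : κ v * P ≠ 0 := ne_of_gt (mul_pos (hpos v) hP)
  have hEv : E v = (∑ c ∈ t.children v, (κ c ^ 2 + κ c * P * E c)) / (κ v * P) := by
    rw [hstep, sub_div, div_self hne]; ring
  rw [hEv, Finset.sum_div]
  refine Finset.sum_congr rfl fun c hc => ?_
  rw [FinRootedTree.resistance, hPc c hc]
  have hκc : κ c ≠ 0 := ne_of_gt (hpos c)
  have hκv : κ v ≠ 0 := ne_of_gt (hpos v)
  have hPne : P ≠ 0 := ne_of_gt hP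
  field_simp
  rw [sub_add_cancel, mul_add, mul_div_assoc', mul_div_cancel_left₀ _ hPne]
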